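/- arXiv:2506.05632 — 2 statements merged into one kernel-verified Lean document; each statement's English description precedes it below -/
import Mathlib

section
/- Extension of GLS marginal correctness to non-identically distributed proposals: let p^(1), …, p^(K) be probability mass functions on {1,…,N} with p^(k)_i > 0 for all i and k, and sample X^(k) = argmin_{1≤i≤N} S_i^(k)/p^(k)_i for each k, while Y = argmin_{1≤i≤N} min_{1≤k≤K} S_i^(k)/q_i as before. Then Pr[X^(k) = j] = p^(k)_j for all k ∈ {1,…,K} and j ∈ {1,…,N}, and Pr[Y = j] = q_j for all j ∈ {1,…,N}. -/
open MeasureTheory ProbabilityTheory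

section GLSAux

open Real Set

lemma lt_ciInf_iff_fin {ι : Type*} [Nonempty ι] [Finite ι] {f : ι → ℝ} {a : ℝ} :
    a < ⨅ i, f i ↔ ∀ i, a < f i := by
  constructor
  · intro h i
    exact h.trans_le (ciInf_le (Set.Finite.bddBelow (Set.finite_range f)) i)
  · intro h
    obtain ⟨i₀, hi₀⟩ := Finite.exists_min f
    exact lt_of_lt_of_le (h i₀) (le_ciInf hi₀)

lemma expMeasure_apply' {r : ℝ} {s : Set ℝ} (hs : MeasurableSet s) :
    expMeasure r s = ∫⁻ x in s, exponentialPDF r x := by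
  rw [expMeasure, gammaMeasure, withDensity_apply _ hs]
  rfl

lemma expMeasure_Iic {r : ℝ} (hr : 0 < r) (t : ℝ) :
    expMeasure r (Iic t) = ENNReal.ofReal (if 0 ≤ t then 1 - rexp (-(r * t)) else 0) := by
  rw [expMeasure_apply' measurableSet_Iic, lintegral_exponentialPDF_eq_antiDeriv hr]

lemma expMeasure_Ioi {r : ℝ} (hr : 0 < r) {t : ℝ} (ht : 0 ≤ t) :
    expMeasure r (Ioi t) = ENNReal.ofReal (rexp (-(r * t))) := by
  haveI := isProbabilityMeasure_expMeasure hr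
  have h1 : Ioi t = (Iic t)ᶜ := by simp
  rw [h1, prob_compl_eq_one_sub measurableSet_Iic, expMeasure_Iic hr, if_pos ht,
    ← ENNReal.ofReal_one,
    ← ENNReal.ofReal_sub _ (sub_nonneg.mpr (Real.exp_le_one_iff.mpr (neg_nonpos.mpr
      (by positivity))))]
  norm_num

lemma map_eq_expMeasure {Ω : Type*} [MeasurableSpace Ω] {μ : Measure Ω} [IsProbabilityMeasure μ]
    {r : ℝ} (hr : 0 < r) {T : Ω → ℝ} (hT : Measurable T)
    (h0 : ∀ t : ℝ, t < 0 → μ {ω | T ω ≤ t} = 0)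
    (h1 : ∀ t : ℝ, 0 ≤ t → μ {ω | t < T ω} = ENNReal.ofReal (rexp (-(r * t)))) :
    μ.map T = expMeasure r := by
  haveI := isProbabilityMeasure_expMeasure hr
  haveI : IsProbabilityMeasure (μ.map T) := Measure.isProbabilityMeasure_map hT.aemeasurable
  refine Measure.ext_of_Iic _ _ (fun t => ?_)
  rw [Measure.map_apply hT measurableSet_Iic, expMeasure_Iic hr]
  by_cases ht : 0 ≤ t
  · have hc : (T ⁻¹' Iic t) = {ω | t < T ω}ᶜ := by
      ext ω; simp [not_lt]
    rw [hc, prob_compl_eq_one_sub (measurableSet_lt measurable_const hT), h1 t ht, if_pos ht,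
      ← ENNReal.ofReal_one, ← ENNReal.ofReal_sub _ (exp_nonneg _)]
  · rw [if_neg ht]
    rw [ENNReal.ofReal_zero]; exact h0 t (lt_of_not_ge ht)

/-- The argmin of independent exponential random variables with rates `r i` lands on `j`
with probability `r j / ∑ i, r i`. -/
lemma exp_argmin {Ω : Type*} [MeasurableSpace Ω] (μ : Measure Ω) [IsProbabilityMeasure μ]
    {N : ℕ} (r : Fin N → ℝ) (hr : ∀ i, 0 < r i)
    (T : Fin N → Ω → ℝ) (hTm : ∀ i, Measurable (T i))
    (hmap : ∀ i, μ.map (T i) = expMeasure (r i))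
    (hsurv : ∀ (s : Finset (Fin N)) (t : ℝ), 0 ≤ t →
      μ (⋂ i ∈ s, {ω | t < T i ω}) = ENNReal.ofReal (Real.exp (-((∑ i ∈ s, r i) * t))))
    (hindep : ∀ j : Fin N, IndepFun (T j) (fun ω => ⨅ i : {i : Fin N // i ≠ j}, T i.1 ω) μ)
    (j : Fin N) :
    μ {ω | ∀ i, i ≠ j → T j ω < T i ω} = ENNReal.ofReal (r j / ∑ i, r i) := by
  by_cases hone : ∀ i : Fin N, i = j
  · have huniv : (Finset.univ : Finset (Fin N)) = {j} := by
      ext i; simp [hone i]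
    have hset : {ω | ∀ i, i ≠ j → T j ω < T i ω} = Set.univ := by
      ext ω; simp only [Set.mem_setOf_eq, Set.mem_univ, iff_true]
      intro i hi; exact absurd (hone i) hi
    rw [hset, huniv]
    simp [div_self (hr j).ne', measure_univ]
  · obtain ⟨i₀, hi₀⟩ := not_forall.mp hone
    haveI : Nonempty {i : Fin N // i ≠ j} := ⟨⟨i₀, hi₀⟩⟩
    set M : Ω → ℝ := fun ω => ⨅ i : {i : Fin N // i ≠ j}, T i.1 ω with hMdef
    have hMm : Measurable M := Measurable.iInf (fun i => hTm i.1)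
    set sr : ℝ := ∑ i ∈ Finset.univ.erase j, r i with hsr
    have hsr0 : 0 ≤ sr := Finset.sum_nonneg fun i _ => (hr i).le
    set b : ℝ := r j + sr with hb
    have hbpos : 0 < b := by have := hr j; linarith
    have hbsum : b = ∑ i, r i := Finset.add_sum_erase _ r (Finset.mem_univ j)
    have hset : {ω | ∀ i, i ≠ j → T j ω < T i ω} = {ω | T j ω < M ω} := by
      ext ω
      simp only [Set.mem_setOf_eq, hMdef, lt_ciInf_iff_fin, Subtype.forall]
    have hMsurv : ∀ a : ℝ, 0 ≤ a →
        μ {ω | a < M ω} = ENNReal.ofReal (rexp (-(sr * a))) := by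
      intro a ha
      have h2 : {ω | a < M ω} = ⋂ i ∈ Finset.univ.erase j, {ω | a < T i ω} := by
        ext ω
        simp only [Set.mem_setOf_eq, hMdef, lt_ciInf_iff_fin, Subtype.forall, Set.mem_iInter,
          Finset.mem_erase, Finset.mem_univ, and_true]
      rw [h2, hsurv _ a ha]
    haveI : IsProbabilityMeasure (μ.map M) := Measure.isProbabilityMeasure_map hMm.aemeasurable
    haveI := isProbabilityMeasure_expMeasure (hr j)
    have hpair := (indepFun_iff_map_prod_eq_prod_map_map (hTm j).aemeasurable
      hMm.aemeasurable).mp (hindep j)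
    have hmlt : MeasurableSet {p : ℝ × ℝ | p.1 < p.2} :=
      measurableSet_lt measurable_fst measurable_snd
    have step1 : μ {ω | T j ω < M ω}
        = ∫⁻ a, μ {ω | a < M ω} ∂(expMeasure (r j)) := by
      have e1 : μ {ω | T j ω < M ω}
          = μ.map (fun ω => (T j ω, M ω)) {p : ℝ × ℝ | p.1 < p.2} := by
        rw [Measure.map_apply ((hTm j).prodMk hMm) hmlt]; rfl
      rw [e1, hpair, hmap j, Measure.prod_apply hmlt]
      refine lintegral_congr fun a => ?_
      have : (Prod.mk a ⁻¹' {p : ℝ × ℝ | p.1 < p.2}) = Ioi a := rfl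
      rw [this, Measure.map_apply hMm measurableSet_Ioi]; rfl
    have hgm : Measurable (fun a : ℝ => μ {ω | a < M ω}) := by
      have : Antitone (fun a : ℝ => μ {ω | a < M ω}) := by
        intro a a' haa'
        exact measure_mono (fun ω hω => lt_of_le_of_lt haa' hω)
      exact this.measurable
    have step2 : ∫⁻ a, μ {ω | a < M ω} ∂(expMeasure (r j))
        = ∫⁻ a in Ici (0:ℝ), ENNReal.ofReal (r j * rexp (-(b * a))) := by
      rw [expMeasure, gammaMeasure]
      have hpdfm : Measurable (gammaPDF 1 (r j)) :=
        (measurable_gammaPDFReal 1 (r j)).ennreal_ofReal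
      rw [lintegral_withDensity_eq_lintegral_mul _ hpdfm hgm]
      have hind : (fun a => (gammaPDF 1 (r j) * fun a => μ {ω | a < M ω}) a)
          = (Ici (0:ℝ)).indicator (fun a => ENNReal.ofReal (r j * rexp (-(b * a)))) := by
        funext a
        by_cases ha : 0 ≤ a
        · rw [Set.indicator_of_mem (show a ∈ Ici (0:ℝ) from ha)]
          have h1 : gammaPDF 1 (r j) a = exponentialPDF (r j) a := rfl
          simp only [Pi.mul_apply, h1, exponentialPDF_of_nonneg ha, hMsurv a ha]
          rw [← ENNReal.ofReal_mul (by have := hr j; positivity), mul_assoc, ← Real.exp_add]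
          congr 2
          rw [hb]; ring
        · rw [Set.indicator_of_notMem (show a ∉ Ici (0:ℝ) from ha)]
          have h1 : gammaPDF 1 (r j) a = exponentialPDF (r j) a := rfl
          simp only [Pi.mul_apply, h1, exponentialPDF_of_neg (lt_of_not_ge ha), zero_mul]
      rw [hind, lintegral_indicator measurableSet_Ici]
    have hInt : IntegrableOn (fun a : ℝ => r j * rexp (-(b * a))) (Ici (0:ℝ)) := by
      rw [integrableOn_Ici_iff_integrableOn_Ioi]
      refine Integrable.const_mul ?_ _
      simpa only [neg_mul, IntegrableOn] using exp_neg_integrableOn_Ioi (0:ℝ) hbpos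
    have step3 : ∫⁻ a in Ici (0:ℝ), ENNReal.ofReal (r j * rexp (-(b * a)))
        = ENNReal.ofReal (r j / ∑ i, r i) := by
      rw [← ofReal_integral_eq_lintegral_ofReal hInt
        (Filter.Eventually.of_forall fun a => by have := hr j; positivity)]
      congr 1
      rw [integral_Ici_eq_integral_Ioi, MeasureTheory.integral_const_mul]
      have : ∫ a in Ioi (0:ℝ), rexp (-(b * a)) = b⁻¹ := by
        have := integral_comp_mul_left_Ioi (fun x => rexp (-x)) 0 hbpos
        simp only [mul_zero, integral_exp_neg_Ioi, neg_zero, Real.exp_zero, smul_eq_mul,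
          mul_one] at this
        rw [this]
      rw [this, hbsum, div_eq_mul_inv]
    rw [hset, step1, step2, step3]

end GLSAux

set_option maxHeartbeats 1000000 in
/-- **GLS marginal correctness with non-identically distributed proposals.**
Let `p 1, …, p K` be probability mass functions on `{1,…,N}` with `p k i > 0`, and
sample `X k = argmin_i S i k / p k i` while `Y = argmin_i (min_k S i k) / q i` as
before.  Then `Pr[X k = j] = p k j` for all `k, j`, and `Pr[Y = j] = q j` for all
`j`. -/
theorem gls_marginals_non_identical_proposals
    {Ω : Type*} [MeasurableSpace Ω] (μ : Measure Ω) [IsProbabilityMeasure μ]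
    (N K : ℕ) (hN : 0 < N) (hK : 0 < K)
    (q : Fin N → ℝ) (hq : ∀ i, 0 < q i) (hqsum : ∑ i, q i = 1)
    (p : Fin K → Fin N → ℝ) (hp : ∀ k i, 0 < p k i) (hpsum : ∀ k, ∑ i, p k i = 1)
    (S : Fin N → Fin K → Ω → ℝ) (hSmeas : ∀ i k, Measurable (S i k))
    (hSindep : iIndepFun
      (fun ik : Fin N × Fin K => S ik.1 ik.2) μ)
    (hSexp : ∀ i k, μ.map (S i k) = expMeasure 1)
    (Y : Ω → Fin N) (hYmeas : Measurable Y)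
    (X : Fin K → Ω → Fin N) (hXmeas : ∀ k, Measurable (X k))
    -- `Y` is a.s. the unique argmin of `i ↦ (min_k S i k) / q i`
    (hY : ∀ᵐ ω ∂μ, ∀ i : Fin N, i ≠ Y ω →
      (⨅ k : Fin K, S (Y ω) k ω) / q (Y ω) < (⨅ k : Fin K, S i k ω) / q i)
    -- each `X k` is a.s. the unique argmin of `i ↦ S i k / p k i`
    (hX : ∀ᵐ ω ∂μ, ∀ k : Fin K, ∀ i : Fin N, i ≠ X k ω →
      S (X k ω) k ω / p k (X k ω) < S i k ω / p k i) :
    (∀ (k : Fin K) (j : Fin N), μ {ω | X k ω = j} = ENNReal.ofReal (p k j)) ∧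
      (∀ j : Fin N, μ {ω | Y ω = j} = ENNReal.ofReal (q j)) := by
  classical
  open Real Set in
  haveI : Nonempty (Fin K) := Fin.pos_iff_nonempty.mp hK
  -- single-variable tail bounds
  have tail : ∀ i k (c : ℝ), 0 ≤ c → μ {ω | c < S i k ω} = ENNReal.ofReal (rexp (-c)) := by
    intro i k c hc
    have h1 : {ω | c < S i k ω} = S i k ⁻¹' Ioi c := rfl
    rw [h1, ← Measure.map_apply (hSmeas i k) measurableSet_Ioi, hSexp i k,
      expMeasure_Ioi one_pos hc, one_mul]
  have tail0 : ∀ i k (c : ℝ), c < 0 → μ {ω | S i k ω ≤ c} = 0 := by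
    intro i k c hc
    have h1 : {ω | S i k ω ≤ c} = S i k ⁻¹' Iic c := rfl
    rw [h1, ← Measure.map_apply (hSmeas i k) measurableSet_Iic, hSexp i k,
      expMeasure_Iic one_pos, if_neg (not_le.mpr hc)]
    simp
  -- joint survival for any finite family of the `S` variables
  have joint : ∀ (A : Finset (Fin N × Fin K)) (c : Fin N × Fin K → ℝ), (∀ a ∈ A, 0 ≤ c a) →
      μ (⋂ a ∈ A, {ω | c a < S a.1 a.2 ω}) = ENNReal.ofReal (rexp (-(∑ a ∈ A, c a))) := by
    intro A c hc
    have hre : (⋂ a ∈ A, {ω | c a < S a.1 a.2 ω}) = ⋂ a ∈ A, S a.1 a.2 ⁻¹' Ioi (c a) := rfl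
    rw [hre, hSindep.meas_biInter (fun a _ => ⟨Ioi (c a), measurableSet_Ioi, rfl⟩)]
    calc ∏ a ∈ A, μ (S a.1 a.2 ⁻¹' Ioi (c a))
        = ∏ a ∈ A, ENNReal.ofReal (rexp (-(c a))) :=
          Finset.prod_congr rfl (fun a ha => tail a.1 a.2 (c a) (hc a ha))
      _ = ENNReal.ofReal (∏ a ∈ A, rexp (-(c a))) :=
          (ENNReal.ofReal_prod_of_nonneg (fun a _ => exp_nonneg _)).symm
      _ = ENNReal.ofReal (rexp (-(∑ a ∈ A, c a))) := by
          rw [← Real.exp_sum]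
          congr 1
          rw [Finset.sum_neg_distrib]
  constructor
  · -- the X part
    intro k j
    set T : Fin N → Ω → ℝ := fun i ω => S i k ω / p k i with hT
    have hTm : ∀ i, Measurable (T i) := fun i => (hSmeas i k).div_const _
    have hmap : ∀ i, μ.map (T i) = expMeasure (p k i) := by
      intro i
      refine map_eq_expMeasure (hp k i) (hTm i) ?_ ?_
      · intro t ht
        have h1 : {ω | T i ω ≤ t} = {ω | S i k ω ≤ t * p k i} := by
          ext ω; simp only [hT, Set.mem_setOf_eq, div_le_iff₀ (hp k i)]
        rw [h1, tail0 i k _ (mul_neg_of_neg_of_pos ht (hp k i))]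
      · intro t ht
        have h1 : {ω | t < T i ω} = {ω | t * p k i < S i k ω} := by
          ext ω; simp only [hT, Set.mem_setOf_eq, lt_div_iff₀ (hp k i)]
        rw [h1, tail i k _ (mul_nonneg ht (hp k i).le)]
        congr 2; ring
    have hsurv : ∀ (s : Finset (Fin N)) (t : ℝ), 0 ≤ t →
        μ (⋂ i ∈ s, {ω | t < T i ω}) = ENNReal.ofReal (rexp (-((∑ i ∈ s, p k i) * t))) := by
      intro s t ht
      have h1 : (⋂ i ∈ s, {ω | t < T i ω})
          = ⋂ a ∈ s.image (fun i => (i, k)), {ω | t * p a.2 a.1 < S a.1 a.2 ω} := by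
        ext ω
        simp only [Set.mem_iInter, Finset.mem_image, Set.mem_setOf_eq, hT]
        constructor
        · rintro h a ⟨i, hi, rfl⟩
          exact (lt_div_iff₀ (hp k i)).mp (h i hi)
        · intro h i hi
          exact (lt_div_iff₀ (hp k i)).mpr (h (i, k) ⟨i, hi, rfl⟩)
      rw [h1, joint _ _ (fun a _ => mul_nonneg ht (hp a.2 a.1).le)]
      have hsum : (∑ a ∈ s.image (fun i => (i, k)), t * p a.2 a.1)
          = (∑ i ∈ s, p k i) * t := by
        rw [Finset.sum_image (fun x _ y _ h => (Prod.ext_iff.mp h).1), Finset.sum_mul]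
        exact Finset.sum_congr rfl fun i _ => by ring
      rw [hsum]
    have hindep : ∀ j : Fin N,
        IndepFun (T j) (fun ω => ⨅ i : {i : Fin N // i ≠ j}, T i.1 ω) μ := by
      intro j
      set A₂ : Finset (Fin N × Fin K) := (Finset.univ.erase j).image (fun i => (i, k)) with hA₂
      have hdis : Disjoint ({(j, k)} : Finset (Fin N × Fin K)) A₂ := by
        rw [Finset.disjoint_left]
        rintro a ha hb
        rw [Finset.mem_singleton] at ha
        subst ha
        obtain ⟨i, hi, he⟩ := Finset.mem_image.mp hb
        exact (Finset.mem_erase.mp hi).1 (congrArg Prod.fst he)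
      have hbase := hSindep.indepFun_finset {(j, k)} A₂ hdis (fun ik => hSmeas ik.1 ik.2)
      have hφ : Measurable
          (fun v : (({(j, k)} : Finset (Fin N × Fin K)) → ℝ) =>
            v ⟨(j, k), Finset.mem_singleton_self _⟩ / p k j) :=
        (measurable_pi_apply _).div_const _
      have hψ : Measurable
          (fun v : {a : Fin N × Fin K // a ∈ A₂} → ℝ =>
            ⨅ i : {i : Fin N // i ≠ j}, v ⟨(i.1, k),
              Finset.mem_image_of_mem _ (Finset.mem_erase.mpr ⟨i.2, Finset.mem_univ _⟩)⟩
              / p k i.1) :=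
        Measurable.iInf fun i => (measurable_pi_apply _).div_const _
      exact hbase.comp hφ hψ
    have key := exp_argmin μ (p k) (hp k) T hTm hmap hsurv hindep j
    rw [hpsum k, div_one] at key
    have hae : {ω | X k ω = j} =ᵐ[μ] {ω | ∀ i, i ≠ j → T j ω < T i ω} := by
      rw [Filter.eventuallyEq_set]
      filter_upwards [hX] with ω hω
      show X k ω = j ↔ ∀ i, i ≠ j → T j ω < T i ω
      constructor
      · rintro rfl i hi
        exact hω k i hi
      · intro h
        by_contra hne
        exact absurd (h (X k ω) (fun e => hne e)) (not_lt.mpr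
          (hω k j (fun e => hne e.symm)).le)
    rw [measure_congr hae, key]
  · -- the Y part
    intro j
    set T : Fin N → Ω → ℝ := fun i ω => (⨅ k, S i k ω) / q i with hT
    set r : Fin N → ℝ := fun i => (K : ℝ) * q i with hrdef
    have hr : ∀ i, 0 < r i := fun i => mul_pos (by exact_mod_cast hK) (hq i)
    have hTm : ∀ i, Measurable (T i) :=
      fun i => (Measurable.iInf fun k => hSmeas i k).div_const _
    have hsum_pair : ∀ (s : Finset (Fin N)) (t : ℝ),
        (∑ a ∈ s ×ˢ (Finset.univ : Finset (Fin K)), t * q a.1) = (∑ i ∈ s, r i) * t := by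
      intro s t
      rw [Finset.sum_product, Finset.sum_mul]
      refine Finset.sum_congr rfl fun i _ => ?_
      show ∑ _y : Fin K, t * q i = r i * t
      rw [Finset.sum_const, Finset.card_univ, Fintype.card_fin, nsmul_eq_mul, hrdef]
      ring
    have hset_pair : ∀ (s : Finset (Fin N)) (t : ℝ),
        (⋂ i ∈ s, {ω | t < T i ω})
          = ⋂ a ∈ s ×ˢ (Finset.univ : Finset (Fin K)), {ω | t * q a.1 < S a.1 a.2 ω} := by
      intro s t
      ext ω
      simp only [Set.mem_iInter, Finset.mem_product, Finset.mem_univ, and_true,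
        Set.mem_setOf_eq, hT]
      constructor
      · rintro h ⟨i, kk⟩ hi
        have := (lt_div_iff₀ (hq i)).mp (h i hi)
        exact lt_ciInf_iff_fin.mp this kk
      · intro h i hi
        refine (lt_div_iff₀ (hq i)).mpr (lt_ciInf_iff_fin.mpr fun kk => h (i, kk) hi)
    have hsurv : ∀ (s : Finset (Fin N)) (t : ℝ), 0 ≤ t →
        μ (⋂ i ∈ s, {ω | t < T i ω}) = ENNReal.ofReal (rexp (-((∑ i ∈ s, r i) * t))) := by
      intro s t ht
      rw [hset_pair s t, joint _ _ (fun a _ => mul_nonneg ht (hq a.1).le), hsum_pair s t]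
    have hmap : ∀ i, μ.map (T i) = expMeasure (r i) := by
      intro i
      refine map_eq_expMeasure (hr i) (hTm i) ?_ ?_
      · intro t ht
        refine measure_mono_null (fun ω hω => ?_)
          (measure_iUnion_null fun k => tail0 i k (t * q i)
            (mul_neg_of_neg_of_pos ht (hq i)))
        have h2 : (⨅ k, S i k ω) ≤ t * q i := (div_le_iff₀ (hq i)).mp hω
        obtain ⟨k₀, hk₀⟩ := Finite.exists_min (fun k => S i k ω)
        exact Set.mem_iUnion.mpr ⟨k₀, le_trans (le_trans (le_ciInf hk₀) h2) le_rfl⟩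
      · intro t ht
        have h1 := hsurv {i} t ht
        simp only [Finset.mem_singleton, Set.iInter_iInter_eq_left, Finset.sum_singleton] at h1
        exact h1
    have hindep : ∀ j : Fin N,
        IndepFun (T j) (fun ω => ⨅ i : {i : Fin N // i ≠ j}, T i.1 ω) μ := by
      intro j
      set A₁ : Finset (Fin N × Fin K) := {j} ×ˢ Finset.univ with hA₁
      set A₂ : Finset (Fin N × Fin K) := (Finset.univ.erase j) ×ˢ Finset.univ with hA₂
      have hdis : Disjoint A₁ A₂ := by
        rw [Finset.disjoint_left]
        intro a ha hb
        rw [hA₁, Finset.mem_product, Finset.mem_singleton] at ha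
        rw [hA₂, Finset.mem_product, Finset.mem_erase] at hb
        exact hb.1.1 ha.1
      have hbase := hSindep.indepFun_finset A₁ A₂ hdis (fun ik => hSmeas ik.1 ik.2)
      have hφ : Measurable
          (fun v : {a : Fin N × Fin K // a ∈ A₁} → ℝ =>
            (⨅ k : Fin K, v ⟨(j, k), by
              simp [hA₁, Finset.mem_product]⟩) / q j) := by
        refine Measurable.div_const ?_ _
        exact Measurable.iInf fun k => measurable_pi_apply _
      have hψ : Measurable
          (fun v : {a : Fin N × Fin K // a ∈ A₂} → ℝ =>
            ⨅ i : {i : Fin N // i ≠ j}, (⨅ k : Fin K, v ⟨(i.1, k), by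
              simp [hA₂, Finset.mem_product, Finset.mem_erase, i.2]⟩) / q i.1) := by
        refine Measurable.iInf fun i => Measurable.div_const ?_ _
        exact Measurable.iInf fun k => measurable_pi_apply _
      exact hbase.comp hφ hψ
    have key := exp_argmin μ r hr T hTm hmap hsurv hindep j
    have hsumr : ∑ i, r i = (K : ℝ) := by
      rw [hrdef, ← Finset.mul_sum, hqsum, mul_one]
    rw [hsumr, hrdef] at key
    have hKne : (K : ℝ) ≠ 0 := by exact_mod_cast hK.ne'
    rw [show ((fun i => (K:ℝ) * q i) j / (K:ℝ)) = q j from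
      mul_div_cancel_left₀ (q j) hKne] at key
    have hae : {ω | Y ω = j} =ᵐ[μ] {ω | ∀ i, i ≠ j → T j ω < T i ω} := by
      rw [Filter.eventuallyEq_set]
      filter_upwards [hY] with ω hω
      show Y ω = j ↔ ∀ i, i ≠ j → T j ω < T i ω
      constructor
      · rintro rfl i hi
        exact hω i hi
      · intro h
        by_contra hne
        exact absurd (h (Y ω) (fun e => hne e)) (not_lt.mpr
          (hω j (fun e => hne e.symm)).le)
    rw [measure_congr hae, key]
end

section
/- Augmented-distribution lemma from the proof of the list matching lemma: flatten the common randomness into T_{j+(k−1)N} = S_j^(k) for j ∈ {1,…,N} and k ∈ {1,…,K}, so that T_1, …, T_{KN} are i.i.d. Exp(1). Define the augmented target distribution q̃ on {1,…,KN} by q̃_{j+(k−1)N} = q_j/K, and set Ỹ = argmin_{1≤i≤KN} T_i/q̃_i. Then: (a) for every j ∈ {1,…,N} and k ∈ {1,…,K}, Pr[Ỹ = j + (k−1)N] = q_j/K; and (b) for every j ∈ {1,…,N}, Pr[Ỹ = j and X^(1) = j] = 1 / ( Σ_{i=1}^{N} [ max{ q_i/q_j , p_i/p_j } + (K − 1)·q_i/q_j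 ] ), where X^(1) = argmin_{1≤i≤N} S_i^(1)/p_i = argmin_{1≤i≤N} T_i/p_i. -/
open MeasureTheory ProbabilityTheory

section GLSAux

open Real Set

section GLSAux

lemma gls_expMeasure_one_Iio_zero : expMeasure 1 (Iio 0) = 0 := by
  rw [expMeasure, gammaMeasure, withDensity_apply _ measurableSet_Iio]
  exact lintegral_gammaPDF_of_nonpos le_rfl

lemma gls_expMeasure_one_Ioi (a : ℝ) (ha : 0 ≤ a) :
    expMeasure 1 (Ioi a) = ENNReal.ofReal (Real.exp (-a)) := by
  have hprob : IsProbabilityMeasure (expMeasure 1) := isProbabilityMeasure_expMeasure one_pos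
  have hIic : expMeasure 1 (Iic a) = ENNReal.ofReal (1 - Real.exp (-a)) := by
    rw [expMeasure, gammaMeasure, withDensity_apply _ measurableSet_Iic]
    have h := lintegral_exponentialPDF_eq_antiDeriv one_pos a
    rw [if_pos ha, one_mul] at h
    simpa [exponentialPDF, exponentialPDFReal, gammaPDF] using h
  have hc := measure_compl (μ := expMeasure 1) (measurableSet_Iic (a := a)) (measure_ne_top _ _)
  rw [Set.compl_Iic] at hc
  have hnn : (0:ℝ) ≤ 1 - Real.exp (-a) := by
    nlinarith [Real.exp_le_one_iff.mpr (neg_nonpos.mpr ha)]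
  have hsub : (1 : ℝ) - (1 - Real.exp (-a)) = Real.exp (-a) := by ring
  rw [hc, hIic, measure_univ, ← ENNReal.ofReal_one, ← ENNReal.ofReal_sub _ hnn, hsub]

lemma gls_laplace (c : ℝ) (hc : 0 ≤ c) :
    ∫⁻ t in Ici (0:ℝ), ENNReal.ofReal (Real.exp (-(c * t))) ∂(expMeasure 1)
      = ENNReal.ofReal (1 / (1 + c)) := by
  have h1c : (0:ℝ) < 1 + c := by linarith
  have hmeas : Measurable fun t : ℝ => ENNReal.ofReal (Real.exp (-(c * t))) := by
    exact ((measurable_const.mul measurable_id).neg.exp).ennreal_ofReal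
  rw [expMeasure, gammaMeasure, restrict_withDensity measurableSet_Ici,
    lintegral_withDensity_eq_lintegral_mul _
      (show Measurable (gammaPDF 1 1) from (measurable_gammaPDFReal 1 1).ennreal_ofReal) hmeas]
  have hcong : ∫⁻ t in Ici (0:ℝ),
      (gammaPDF 1 1 * fun t : ℝ => ENNReal.ofReal (Real.exp (-(c * t)))) t
      = ∫⁻ t in Ici (0:ℝ), ENNReal.ofReal (1/(1+c)) * exponentialPDF (1+c) t := by
    refine setLIntegral_congr_fun measurableSet_Ici (fun t ht => ?_)
    have ht' : (0:ℝ) ≤ t := ht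
    have h1 : gammaPDF 1 1 t = ENNReal.ofReal (Real.exp (-t)) := by
      rw [gammaPDF, gammaPDFReal, if_pos ht']
      norm_num [Real.Gamma_one]
    simp only [Pi.mul_apply]
    rw [h1, exponentialPDF_of_nonneg ht', ← ENNReal.ofReal_mul (Real.exp_pos _).le,
      ← ENNReal.ofReal_mul (by positivity)]
    congr 1
    rw [← Real.exp_add]
    have hfs : 1 / (1 + c) * ((1 + c) * rexp (-((1 + c) * t))) = rexp (-((1+c)*t)) := by
      field_simp
    rw [hfs]
    congr 1
    ring
  rw [hcong, lintegral_const_mul _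
    (show Measurable (exponentialPDF (1+c)) from (measurable_exponentialPDFReal _).ennreal_ofReal)]
  have hone : ∫⁻ t in Ici (0:ℝ), exponentialPDF (1+c) t = 1 := by
    have h := lintegral_exponentialPDF_eq_one (r := 1+c) h1c
    rw [← lintegral_add_compl (exponentialPDF (1+c)) measurableSet_Ici, Set.compl_Ici,
      lintegral_exponentialPDF_of_nonpos le_rfl, add_zero] at h
    exact h
  rw [hone, mul_one]

theorem gls_master {Ω : Type*} [MeasurableSpace Ω] (μ : Measure Ω) [IsProbabilityMeasure μ]
    {ι : Type*} [Fintype ι] [DecidableEq ι]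
    (T : ι → Ω → ℝ) (hTmeas : ∀ l, Measurable (T l))
    (hTindep : iIndepFun T μ)
    (hTexp : ∀ l, μ.map (T l) = expMeasure 1)
    (l0 : ι) (r : ι → ℝ) (hr : ∀ l, 0 < r l) :
    μ {ω | ∀ l, l ≠ l0 → r l * T l0 ω < T l ω}
      = ENNReal.ofReal (1 / (1 + ∑ l ∈ Finset.univ.erase l0, r l)) := by
  classical
  set E : Finset ι := Finset.univ.erase l0 with hE
  set c : ℝ := ∑ l ∈ E, r l with hc
  have hc0 : 0 ≤ c := Finset.sum_nonneg fun l _ => (hr l).le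
  set f : Ω → ℝ := T l0 with hf
  set g : Ω → (E → ℝ) := fun ω (l : E) => T l ω with hg
  have hfmeas : Measurable f := hTmeas l0
  have hgmeas : Measurable g := measurable_pi_lambda _ fun l => hTmeas l
  have hind : IndepFun f g μ := by
    have hdisj : Disjoint ({l0} : Finset ι) E :=
      Finset.disjoint_singleton_left.mpr (Finset.notMem_erase l0 _)
    have h := hTindep.indepFun_finset {l0} E hdisj hTmeas
    exact h.comp (φ := fun z : (({l0} : Finset ι) → ℝ) => z ⟨l0, Finset.mem_singleton_self l0⟩)
      (ψ := id) (measurable_pi_apply _) measurable_id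
  have hmap : μ.map (fun ω => (f ω, g ω)) = (μ.map f).prod (μ.map g) :=
    (indepFun_iff_map_prod_eq_prod_map_map hfmeas.aemeasurable hgmeas.aemeasurable).mp hind
  set C : Set (ℝ × (E → ℝ)) := {tz | ∀ l : E, r l * tz.1 < tz.2 l} with hCdef
  have hCmeas : MeasurableSet C := by
    have hCeq : C = ⋂ l : E, {tz : ℝ × (E → ℝ) | r l * tz.1 < tz.2 l} := by
      ext tz; simp [hCdef]
    rw [hCeq]
    exact MeasurableSet.iInter fun l =>
      measurableSet_lt (measurable_fst.const_mul _) ((measurable_pi_apply l).comp measurable_snd)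
  have hset : {ω | ∀ l, l ≠ l0 → r l * T l0 ω < T l ω} = (fun ω => (f ω, g ω)) ⁻¹' C := by
    ext ω
    simp only [Set.mem_setOf_eq, Set.mem_preimage, hCdef]
    constructor
    · rintro h ⟨l, hl⟩; exact h l (Finset.ne_of_mem_erase hl)
    · intro h l hl; exact h ⟨l, Finset.mem_erase.mpr ⟨hl, Finset.mem_univ l⟩⟩
  haveI : IsProbabilityMeasure (μ.map g) := Measure.isProbabilityMeasure_map hgmeas.aemeasurable
  rw [hset, ← Measure.map_apply (hfmeas.prodMk hgmeas) hCmeas, hmap, Measure.prod_apply hCmeas]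
  have hslice : ∀ t : ℝ, (μ.map g) (Prod.mk t ⁻¹' C) = ∏ l ∈ E, (expMeasure 1) (Ioi (r l * t)) := by
    intro t
    have h1 : Prod.mk t ⁻¹' C = Set.pi Set.univ (fun l : E => Ioi (r l * t)) := by
      ext z; simp [hCdef, Set.mem_pi]
    rw [h1, Measure.map_apply hgmeas (MeasurableSet.univ_pi fun l => measurableSet_Ioi)]
    have h2 : g ⁻¹' (Set.pi Set.univ fun l : E => Ioi (r l * t))
        = ⋂ l ∈ E, T l ⁻¹' Ioi (r l * t) := by
      ext ω
      simp only [Set.mem_preimage, Set.mem_pi, Set.mem_univ, forall_true_left, Set.mem_iInter, hg]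
      constructor
      · intro h l hl; exact h ⟨l, hl⟩
      · intro h l; exact h l l.2
    rw [h2, hTindep.measure_inter_preimage_eq_mul E (fun l _ => measurableSet_Ioi)]
    refine Finset.prod_congr rfl fun l hl => ?_
    rw [← Measure.map_apply (hTmeas l) measurableSet_Ioi, hTexp l]
  have hfl : μ.map f = expMeasure 1 := hTexp l0
  rw [hfl]
  have hsplit : ∫⁻ t, (μ.map g) (Prod.mk t ⁻¹' C) ∂(expMeasure 1)
      = ∫⁻ t in Ici (0:ℝ), (μ.map g) (Prod.mk t ⁻¹' C) ∂(expMeasure 1) := by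
    rw [← lintegral_add_compl (fun t => (μ.map g) (Prod.mk t ⁻¹' C)) measurableSet_Ici,
      Set.compl_Ici,
      Measure.restrict_eq_zero.mpr gls_expMeasure_one_Iio_zero, lintegral_zero_measure, add_zero]
  rw [hsplit]
  have hcong : ∫⁻ t in Ici (0:ℝ), (μ.map g) (Prod.mk t ⁻¹' C) ∂(expMeasure 1)
      = ∫⁻ t in Ici (0:ℝ), ENNReal.ofReal (Real.exp (-(c * t))) ∂(expMeasure 1) := by
    refine setLIntegral_congr_fun measurableSet_Ici (fun t ht => ?_)
    have ht' : (0:ℝ) ≤ t := ht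
    rw [hslice t,
      Finset.prod_congr rfl (fun l (_ : l ∈ E) =>
        gls_expMeasure_one_Ioi _ (mul_nonneg (hr l).le ht')),
      ← ENNReal.ofReal_prod_of_nonneg (fun l _ => (Real.exp_pos _).le), ← Real.exp_sum]
    congr 2
    rw [hc, Finset.sum_mul, ← Finset.sum_neg_distrib]
  rw [hcong, gls_laplace c hc0]

lemma gls_div_lt_div_iff {a b x y : ℝ} (hx : 0 < x) (hy : 0 < y) :
    a / x < b / y ↔ (y / x) * a < b := by
  rw [div_lt_div_iff₀ hx hy, div_mul_eq_mul_div, div_lt_iff₀ hx, mul_comm a y]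

lemma gls_ratio {qi qj k : ℝ} (hk : k ≠ 0) (hqj : qj ≠ 0) : (qi / k) / (qj / k) = qi / qj := by
  field_simp

end GLSAux

open Real Set in
/-- **Augmented-distribution lemma from the proof of the list matching lemma.**
Flatten the common randomness `S j k` (i.i.d. `Exp(1)`) into a single family indexed
by pairs `(j, k)` (corresponding to the flattened index `j + (k-1)N`), and define the
augmented target distribution `q̃ (j,k) = q j / K` on the extended alphabet.  Let
`Ỹ` be the a.s.-unique argmin of `(i,k) ↦ S i k / (q i / K)`.  Then
(a) `Pr[Ỹ = (j,k)] = q j / K` for all `j, k`; and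
(b) for all `j`, `Pr[Ỹ = (j,1) ∧ X 1 = j] =
    1 / ∑ i (max (q i / q j) (p i / p j) + (K-1) * q i / q j)`,
where `X 1 = argmin_i S i 1 / p i` (here `1` denotes the first of the `K` indices,
so `(j,1)` corresponds to the flattened index `j ∈ {1,…,N}`). -/
theorem gls_augmented_distribution_lemma
    {Ω : Type*} [MeasurableSpace Ω] (μ : Measure Ω) [IsProbabilityMeasure μ]
    (N K : ℕ) (hN : 0 < N) (hK : 0 < K)
    (p q : Fin N → ℝ) (hp : ∀ i, 0 < p i) (hq : ∀ i, 0 < q i)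
    (hpsum : ∑ i, p i = 1) (hqsum : ∑ i, q i = 1)
    (S : Fin N → Fin K → Ω → ℝ) (hSmeas : ∀ i k, Measurable (S i k))
    (hSindep : iIndepFun
      (fun ik : Fin N × Fin K => S ik.1 ik.2) μ)
    (hSexp : ∀ i k, μ.map (S i k) = expMeasure 1)
    (Ytilde : Ω → Fin N × Fin K) (hYtmeas : Measurable Ytilde)
    (X1 : Ω → Fin N) (hX1meas : Measurable X1)
    -- `Ỹ` is a.s. the unique argmin of `(i,k) ↦ S i k / q̃ (i,k)` with `q̃ (i,k) = q i / K`
    (hYt : ∀ᵐ ω ∂μ, ∀ ik : Fin N × Fin K, ik ≠ Ytilde ω →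
      S (Ytilde ω).1 (Ytilde ω).2 ω / (q (Ytilde ω).1 / K) < S ik.1 ik.2 ω / (q ik.1 / K))
    -- `X 1` is a.s. the unique argmin of `i ↦ S i 1 / p i` (first proposal set)
    (hX1 : ∀ᵐ ω ∂μ, ∀ i : Fin N, i ≠ X1 ω →
      S (X1 ω) ⟨0, hK⟩ ω / p (X1 ω) < S i ⟨0, hK⟩ ω / p i) :
    (∀ (j : Fin N) (k : Fin K),
        μ {ω | Ytilde ω = (j, k)} = ENNReal.ofReal (q j / K)) ∧
      (∀ j : Fin N,
        μ {ω | Ytilde ω = (j, ⟨0, hK⟩) ∧ X1 ω = j}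
          = ENNReal.ofReal (1 /
              ∑ i : Fin N, (max (q i / q j) (p i / p j) + ((K : ℝ) - 1) * (q i / q j)))) := by
  classical
  have hKpos : (0:ℝ) < K := Nat.cast_pos.mpr hK
  constructor
  · -- part (a)
    intro j k
    set r : Fin N × Fin K → ℝ := fun ik => q ik.1 / q j with hrdef
    have hrpos : ∀ ik, 0 < r ik := fun ik => div_pos (hq ik.1) (hq j)
    have hmaster : μ {ω | ∀ ik : Fin N × Fin K, ik ≠ (j, k) → r ik * S j k ω < S ik.1 ik.2 ω}
        = ENNReal.ofReal (1 / (1 + ∑ l ∈ Finset.univ.erase (j, k), r l)) :=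
      gls_master μ (fun ik : Fin N × Fin K => S ik.1 ik.2) (fun ik => hSmeas ik.1 ik.2)
        hSindep (fun ik => hSexp ik.1 ik.2) (j, k) r hrpos
    have hae : {ω | Ytilde ω = (j, k)}
        =ᵐ[μ] {ω | ∀ ik : Fin N × Fin K, ik ≠ (j, k) → r ik * S j k ω < S ik.1 ik.2 ω} := by
      filter_upwards [hYt] with ω hω
      simp only [Set.mem_setOf_eq, eq_iff_iff]
      constructor
      · intro hY ik hik
        have h1 := hω ik (by rw [hY]; exact hik)
        rw [hY] at h1
        rw [gls_div_lt_div_iff (div_pos (hq j) hKpos) (div_pos (hq ik.1) hKpos),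
          gls_ratio hKpos.ne' (hq j).ne'] at h1
        rw [hrdef]
        exact h1
      · intro h
        by_contra hne
        have h1 := hω (j, k) (fun hl => hne hl.symm)
        have h2 : q (Ytilde ω).1 / q j * S j k ω < S (Ytilde ω).1 (Ytilde ω).2 ω := by
          have := h (Ytilde ω) (fun hl => hne hl); rw [hrdef] at this; exact this
        rw [← gls_ratio hKpos.ne' (hq j).ne',
          ← gls_div_lt_div_iff (div_pos (hq j) hKpos) (div_pos (hq (Ytilde ω).1) hKpos)] at h2
        exact absurd h1 (lt_asymm h2)
    rw [measure_congr hae, hmaster]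
    congr 1
    have hsum : ∑ ik : Fin N × Fin K, r ik = K / q j := by
      rw [hrdef, Fintype.sum_prod_type]
      have h1 : ∀ i : Fin N, ∑ _k : Fin K, q i / q j = (K : ℝ) * (q i / q j) := fun i => by
        simp [Finset.sum_const, nsmul_eq_mul]
      rw [Finset.sum_congr rfl fun i _ => h1 i, ← Finset.mul_sum, ← Finset.sum_div, hqsum]
      rw [mul_one_div]
    have hrl0 : r (j, k) = 1 := by rw [hrdef]; exact div_self (hq j).ne'
    have hadd : 1 + ∑ l ∈ Finset.univ.erase (j, k), r l = K / q j := by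
      rw [← hrl0, Finset.add_sum_erase _ r (Finset.mem_univ (j, k)), hsum]
    rw [hadd, one_div_div]
  · -- part (b)
    intro j
    set k0 : Fin K := ⟨0, hK⟩ with hk0
    set r : Fin N × Fin K → ℝ := fun ik =>
      if ik.2 = k0 then max (q ik.1 / q j) (p ik.1 / p j) else q ik.1 / q j with hrdef
    have hrpos : ∀ ik, 0 < r ik := by
      intro ik
      rw [hrdef]
      dsimp only
      split_ifs
      · exact lt_of_lt_of_le (div_pos (hq ik.1) (hq j)) (le_max_left _ _)
      · exact div_pos (hq ik.1) (hq j)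
    have hqler : ∀ ik : Fin N × Fin K, q ik.1 / q j ≤ r ik := by
      intro ik
      rw [hrdef]
      dsimp only
      split_ifs
      · exact le_max_left _ _
      · exact le_rfl
    have hmaster : μ {ω | ∀ ik : Fin N × Fin K, ik ≠ (j, k0) → r ik * S j k0 ω < S ik.1 ik.2 ω}
        = ENNReal.ofReal (1 / (1 + ∑ l ∈ Finset.univ.erase (j, k0), r l)) :=
      gls_master μ (fun ik : Fin N × Fin K => S ik.1 ik.2) (fun ik => hSmeas ik.1 ik.2)
        hSindep (fun ik => hSexp ik.1 ik.2) (j, k0) r hrpos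
    have hS0 : ∀ᵐ ω ∂μ, 0 ≤ S j k0 ω := by
      have hz : μ (S j k0 ⁻¹' Iio 0) = 0 := by
        rw [← Measure.map_apply (hSmeas j k0) measurableSet_Iio, hSexp j k0]
        exact gls_expMeasure_one_Iio_zero
      rw [ae_iff]
      convert hz using 2
      ext ω
      simp [not_le]
    have hae : {ω | Ytilde ω = (j, k0) ∧ X1 ω = j}
        =ᵐ[μ] {ω | ∀ ik : Fin N × Fin K, ik ≠ (j, k0) → r ik * S j k0 ω < S ik.1 ik.2 ω} := by
      filter_upwards [hYt, hX1, hS0] with ω hω hωX hSnn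
      simp only [Set.mem_setOf_eq, eq_iff_iff]
      constructor
      · rintro ⟨hYe, hXe⟩ ik hik
        have hqb : q ik.1 / q j * S j k0 ω < S ik.1 ik.2 ω := by
          have h1 := hω ik (by rw [hYe]; exact hik)
          rw [hYe] at h1
          rw [gls_div_lt_div_iff (div_pos (hq j) hKpos) (div_pos (hq ik.1) hKpos),
            gls_ratio hKpos.ne' (hq j).ne'] at h1
          exact h1
        rw [hrdef]
        dsimp only
        split_ifs with hik2
        · have hne1 : ik.1 ≠ j := by
            intro hik1
            exact hik (Prod.ext hik1 hik2)
          have hpb : p ik.1 / p j * S j k0 ω < S ik.1 ik.2 ω := by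
            have h2 := hωX ik.1 (by rw [hXe]; exact hne1)
            rw [hXe] at h2
            rw [gls_div_lt_div_iff (hp j) (hp ik.1)] at h2
            rw [hik2]
            exact h2
          rcases max_choice (q ik.1 / q j) (p ik.1 / p j) with hmx | hmx <;> rw [hmx]
          · exact hqb
          · exact hpb
        · exact hqb
      · intro h
        have hkey : ∀ ik : Fin N × Fin K, ik ≠ (j, k0) →
            q ik.1 / q j * S j k0 ω < S ik.1 ik.2 ω := by
          intro ik hik
          exact lt_of_le_of_lt (mul_le_mul_of_nonneg_right (hqler ik) hSnn) (h ik hik)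
        have hYe : Ytilde ω = (j, k0) := by
          by_contra hne
          have h1 := hω (j, k0) (fun hl => hne hl.symm)
          have h2 := hkey (Ytilde ω) (fun hl => hne hl)
          rw [← gls_ratio hKpos.ne' (hq j).ne',
            ← gls_div_lt_div_iff (div_pos (hq j) hKpos) (div_pos (hq (Ytilde ω).1) hKpos)] at h2
          exact absurd h1 (lt_asymm h2)
        refine ⟨hYe, ?_⟩
        by_contra hne
        have hXne : (X1 ω, k0) ≠ (j, k0) := by
          intro he
          exact hne (congrArg Prod.fst he)
        have h2 := h (X1 ω, k0) hXne
        have hrx : r (X1 ω, k0) = max (q (X1 ω) / q j) (p (X1 ω) / p j) := by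
          rw [hrdef]
          dsimp only
          rw [if_pos rfl]
        have hpb : p (X1 ω) / p j * S j k0 ω < S (X1 ω) k0 ω := by
          refine lt_of_le_of_lt (mul_le_mul_of_nonneg_right ?_ hSnn) h2
          rw [hrx]
          exact le_max_right _ _
        rw [← gls_div_lt_div_iff (hp j) (hp (X1 ω))] at hpb
        have h3 := hωX j (fun hl => hne hl.symm)
        exact absurd h3 (lt_asymm hpb)
    rw [measure_congr hae, hmaster]
    congr 1
    have hinner : ∀ i : Fin N, ∑ k : Fin K, r (i, k)
        = max (q i / q j) (p i / p j) + ((K : ℝ) - 1) * (q i / q j) := by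
      intro i
      have h1 : ∀ k : Fin K, r (i, k)
          = q i / q j + (if k = k0 then max (q i / q j) (p i / p j) - q i / q j else 0) := by
        intro k
        rw [hrdef]
        dsimp only
        split_ifs <;> ring
      rw [Finset.sum_congr rfl fun k _ => h1 k, Finset.sum_add_distrib, Finset.sum_const,
        Finset.sum_ite_eq' Finset.univ k0
          (fun _ => max (q i / q j) (p i / p j) - q i / q j),
        if_pos (Finset.mem_univ k0), Finset.card_univ, Fintype.card_fin, nsmul_eq_mul]
      ring
    have hsum : ∑ ik : Fin N × Fin K, r ik
        = ∑ i : Fin N, (max (q i / q j) (p i / p j) + ((K : ℝ) - 1) * (q i / q j)) := by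
      rw [Fintype.sum_prod_type]
      exact Finset.sum_congr rfl fun i _ => hinner i
    have hrl0 : r (j, k0) = 1 := by
      rw [hrdef]
      dsimp only
      rw [if_pos rfl, div_self (hq j).ne', div_self (hp j).ne', max_self]
    have hadd : 1 + ∑ l ∈ Finset.univ.erase (j, k0), r l
        = ∑ i : Fin N, (max (q i / q j) (p i / p j) + ((K : ℝ) - 1) * (q i / q j)) := by
      conv_lhs => rw [← hrl0]
      rw [Finset.add_sum_erase _ r (Finset.mem_univ (j, k0)), hsum]
    rw [hadd]
end GLSAux
end
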